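/- Let n ≥ 1, let A and B be Hermitian n×n complex matrices all of whose eigenvalues lie in the open interval (−1,1) (so that A and B are G₁ operators with spectra in the open unit disk), let f, g ∈ 𝔥, and let X be an arbitrary n×n complex matrix. Then for every unitarily invariant norm N on the n×n complex matrices, N(f(A)X + Xg(B)) ≤ (2√2/(d_A d_B)) · N(|AXB| + |X|). -/

import Mathlib

open Matrix
open scoped ComplexOrder

/-- `f(A)` for a Hermitian matrix `A`, defined via the spectral decomposition:
`f(A) = U diag(f(λ₁),…,f(λₙ)) U*`. -/
noncomputable def herFun {n : ℕ} {A : Matrix (Fin n) (Fin n) ℂ} (hA : A.IsHermitian)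
    (f : ℂ → ℂ) : Matrix (Fin n) (Fin n) ℂ :=
  (hA.eigenvectorUnitary : Matrix (Fin n) (Fin n) ℂ) *
    Matrix.diagonal (fun i => f (hA.eigenvalues i : ℂ)) *
    star (hA.eigenvectorUnitary : Matrix (Fin n) (Fin n) ℂ)

/-- `|X| = (X*X)^{1/2}`, the positive semidefinite absolute value of a matrix. -/
noncomputable def matAbs {n : ℕ} (X : Matrix (Fin n) (Fin n) ℂ) : Matrix (Fin n) (Fin n) ℂ :=
  (Matrix.isHermitian_conjTranspose_mul_self X).eigenvectorUnitary.1 *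
    Matrix.diagonal (((↑) : ℝ → ℂ) ∘ (√·) ∘ (Matrix.isHermitian_conjTranspose_mul_self X).eigenvalues) *
    (star (Matrix.isHermitian_conjTranspose_mul_self X).eigenvectorUnitary : Matrix (Fin n) (Fin n) ℂ)

/-- `d_A = min { 1 - |λⱼ| }`, the distance from the unit circle to the spectrum of a
Hermitian matrix `A` whose eigenvalues lie in `(-1,1)`. -/
noncomputable def dDist {n : ℕ} {A : Matrix (Fin n) (Fin n) ℂ} (hA : A.IsHermitian) : ℝ :=
  ⨅ i, (1 - |hA.eigenvalues i|)

/-- Membership in the class `𝔥`: analytic on the open unit disk, positive real part there,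
and value `1` at the origin. -/
def MemH (f : ℂ → ℂ) : Prop :=
  DifferentiableOn ℂ f (Metric.ball (0 : ℂ) 1) ∧
    (∀ z ∈ Metric.ball (0 : ℂ) 1, 0 < (f z).re) ∧ f 0 = 1

/-- A function `N` on `n × n` complex matrices is a unitarily invariant norm. -/
def IsUnitarilyInvariantNorm {m : Type*} [Fintype m] [DecidableEq m]
    (N : Matrix m m ℂ → ℝ) : Prop :=
  (∀ X, N X = 0 ↔ X = 0) ∧
    (∀ (c : ℂ) X, N (c • X) = ‖c‖ * N X) ∧
    (∀ X Y, N (X + Y) ≤ N X + N Y) ∧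
    (∀ (U V : Matrix.unitaryGroup m ℂ) (X : Matrix m m ℂ),
      N ((U : Matrix m m ℂ) * X * (V : Matrix m m ℂ)) = N X)
section NormFacts

variable {m : Type*} [Fintype m] [DecidableEq m] {N : Matrix m m ℂ → ℝ}


theorem N_nonneg (hN : IsUnitarilyInvariantNorm N) (X : Matrix m m ℂ) : 0 ≤ N X := by
  obtain ⟨h0, hs, ht, hu⟩ := hN
  have h1 : N ((-1 : ℂ) • X) = N X := by rw [hs]; simp
  have h2 : N (X + (-1 : ℂ) • X) ≤ N X + N ((-1 : ℂ) • X) := ht _ _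
  have h3 : X + (-1 : ℂ) • X = 0 := by simp
  rw [h3, (h0 0).mpr rfl, h1] at h2
  linarith

theorem N_mul_U (hN : IsUnitarilyInvariantNorm N) {U : Matrix m m ℂ}
    (hU : U ∈ Matrix.unitaryGroup m ℂ) (X : Matrix m m ℂ) : N (X * U) = N X := by
  have := hN.2.2.2 1 ⟨U, hU⟩ X
  simpa using this

theorem N_U_mul (hN : IsUnitarilyInvariantNorm N) {U : Matrix m m ℂ}
    (hU : U ∈ Matrix.unitaryGroup m ℂ) (X : Matrix m m ℂ) : N (U * X) = N X := by
  have := hN.2.2.2 ⟨U, hU⟩ 1 X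
  simpa [Matrix.mul_assoc] using this

theorem diag_mem_unitary {u : m → ℂ} (hu : ∀ i, ‖u i‖ = 1) :
    Matrix.diagonal u ∈ Matrix.unitaryGroup m ℂ := by
  rw [Matrix.mem_unitaryGroup_iff]
  have : star (Matrix.diagonal u) = Matrix.diagonal (star u) := Matrix.diagonal_conjTranspose u
  rw [this, Matrix.diagonal_mul_diagonal]
  have huu : (fun i => u i * star u i) = fun _ => (1 : ℂ) := by
    funext i
    simp only [Pi.mul_apply, Pi.star_apply, RCLike.star_def, Pi.one_apply]
    rw [Complex.mul_conj, Complex.normSq_eq_norm_sq]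
    rw [hu i]
    norm_num
  rw [huu]
  exact Matrix.diagonal_one

theorem exists_unit_decomp {c : ℝ} (hc : 0 < c) (w : ℂ) (hw : ‖w‖ ≤ c) :
    ∃ u v : ℂ, ‖u‖ = 1 ∧ ‖v‖ = 1 ∧ w = (c / 2 : ℂ) * (u + v) := by
  set s : ℂ := if w = 0 then 1 else w / ‖w‖ with hs
  have hsnorm : ‖s‖ = 1 := by
    rw [hs]
    split_ifs with h
    · simp
    · rw [norm_div]
      rw [Complex.norm_real, Real.norm_eq_abs, abs_of_pos (norm_pos_iff.mpr h)]
      exact div_self (norm_ne_zero_iff.mpr h)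
  have hws : w = (‖w‖ : ℂ) * s := by
    rw [hs]
    split_ifs with h
    · simp [h]
    · rw [mul_div_assoc']
      rw [mul_comm, mul_div_assoc, div_self, mul_one]
      exact_mod_cast norm_ne_zero_iff.mpr h
  set t : ℝ := Real.sqrt (c ^ 2 - ‖w‖ ^ 2) with ht
  have ht2 : t ^ 2 = c ^ 2 - ‖w‖ ^ 2 := Real.sq_sqrt (by nlinarith [norm_nonneg w])
  have habs : ‖(‖w‖ : ℂ) + t * Complex.I‖ = c := by
    rw [Complex.norm_add_mul_I]
    rw [show ‖w‖ ^ 2 + t ^ 2 = c ^ 2 by rw [ht2]; ring]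
    exact Real.sqrt_sq hc.le
  have habs' : ‖(‖w‖ : ℂ) - t * Complex.I‖ = c := by
    have : (‖w‖ : ℂ) - t * Complex.I = (‖w‖ : ℂ) + ((-t : ℝ) : ℂ) * Complex.I := by
      push_cast; ring
    rw [this, Complex.norm_add_mul_I]
    rw [show ‖w‖ ^ 2 + (-t) ^ 2 = c ^ 2 by rw [show (-t)^2 = t^2 by ring, ht2]; ring]
    exact Real.sqrt_sq hc.le
  refine ⟨s * ((‖w‖ : ℂ) + t * Complex.I) / c, s * ((‖w‖ : ℂ) - t * Complex.I) / c, ?_, ?_, ?_⟩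
  · rw [norm_div, norm_mul, hsnorm, one_mul]
    rw [show ‖(‖w‖ : ℂ) + t * Complex.I‖ = ‖(‖w‖ : ℂ) + t * Complex.I‖ from rfl, habs]
    simp [abs_of_pos hc, div_self hc.ne']
  · rw [norm_div, norm_mul, hsnorm, one_mul]
    rw [show ‖(‖w‖ : ℂ) - t * Complex.I‖ = ‖(‖w‖ : ℂ) - t * Complex.I‖ from rfl, habs']
    simp [abs_of_pos hc, div_self hc.ne']
  · have hcne : (c : ℂ) ≠ 0 := by exact_mod_cast hc.ne'
    have hsum : (↑c / 2 : ℂ) * (s * ((‖w‖ : ℂ) + t * Complex.I) / c +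
        s * ((‖w‖ : ℂ) - t * Complex.I) / c) = s * (‖w‖ : ℂ) := by
      field_simp
      ring
    rw [hsum]
    exact hws.trans (mul_comm _ _)

theorem N_diag_mul_le (hN : IsUnitarilyInvariantNorm N) {c : ℝ} (hc : 0 < c) {w : m → ℂ}
    (hw : ∀ i, ‖w i‖ ≤ c) (Y : Matrix m m ℂ) : N (Matrix.diagonal w * Y) ≤ c * N Y := by
  choose u v hu hv huv using fun i => exists_unit_decomp hc (w i) (hw i)
  have hdec : Matrix.diagonal w = (c / 2 : ℂ) • (Matrix.diagonal u + Matrix.diagonal v) := by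
    ext i j
    rcases eq_or_ne i j with rfl | hij
    · simp [Matrix.diagonal_apply_eq, huv i]
    · simp [Matrix.diagonal_apply_ne _ hij]
  have hUu := diag_mem_unitary hu
  have hUv := diag_mem_unitary hv
  rw [hdec, Matrix.smul_mul, Matrix.add_mul, hN.2.1]
  have : ‖((c : ℂ) / 2 : ℂ)‖ = c / 2 := by
    rw [show ((c : ℂ) / 2) = ((c / 2 : ℝ) : ℂ) by push_cast; ring, Complex.norm_real,
      Real.norm_eq_abs, abs_of_pos (by linarith)]
  rw [this]
  have h1 := hN.2.2.1 (Matrix.diagonal u * Y) (Matrix.diagonal v * Y)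
  have h2 : N (Matrix.diagonal u * Y) = N Y := N_U_mul hN hUu Y
  have h3 : N (Matrix.diagonal v * Y) = N Y := N_U_mul hN hUv Y
  rw [h2, h3] at h1
  have hNY := N_nonneg hN Y
  calc c / 2 * N (Matrix.diagonal u * Y + Matrix.diagonal v * Y)
      ≤ c / 2 * (N Y + N Y) := by apply mul_le_mul_of_nonneg_left h1 (by linarith)
    _ = c * N Y := by ring

theorem N_mul_diag_le (hN : IsUnitarilyInvariantNorm N) {c : ℝ} (hc : 0 < c) {w : m → ℂ}
    (hw : ∀ i, ‖w i‖ ≤ c) (Y : Matrix m m ℂ) : N (Y * Matrix.diagonal w) ≤ c * N Y := by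
  choose u v hu hv huv using fun i => exists_unit_decomp hc (w i) (hw i)
  have hdec : Matrix.diagonal w = (c / 2 : ℂ) • (Matrix.diagonal u + Matrix.diagonal v) := by
    ext i j
    rcases eq_or_ne i j with rfl | hij
    · simp [Matrix.diagonal_apply_eq, huv i]
    · simp [Matrix.diagonal_apply_ne _ hij]
  have hUu := diag_mem_unitary hu
  have hUv := diag_mem_unitary hv
  rw [hdec, Matrix.mul_smul, Matrix.mul_add, hN.2.1]
  have : ‖((c : ℂ) / 2 : ℂ)‖ = c / 2 := by
    rw [show ((c : ℂ) / 2) = ((c / 2 : ℝ) : ℂ) by push_cast; ring, Complex.norm_real,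
      Real.norm_eq_abs, abs_of_pos (by linarith)]
  rw [this]
  have h1 := hN.2.2.1 (Y * Matrix.diagonal u) (Y * Matrix.diagonal v)
  have h2 : N (Y * Matrix.diagonal u) = N Y := N_mul_U hN hUu Y
  have h3 : N (Y * Matrix.diagonal v) = N Y := N_mul_U hN hUv Y
  rw [h2, h3] at h1
  have hNY := N_nonneg hN Y
  calc c / 2 * N (Y * Matrix.diagonal u + Y * Matrix.diagonal v)
      ≤ c / 2 * (N Y + N Y) := by apply mul_le_mul_of_nonneg_left h1 (by linarith)
    _ = c * N Y := by ring

end NormFacts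

section SchwarzFacts
open Metric


theorem memH_bound {f : ℂ → ℂ} (hf : MemH f) {z : ℂ} (hz : ‖z‖ < 1) :
    ‖f z‖ ≤ (1 + ‖z‖) / (1 - ‖z‖) := by
  obtain ⟨hdiff, hre, hf0⟩ := hf
  have hzball : z ∈ ball (0 : ℂ) 1 := by simpa [mem_ball, dist_eq_norm] using hz
  -- the Cayley transform of f
  set φ : ℂ → ℂ := fun w => (f w - 1) / (f w + 1) with hφ
  have hne : ∀ w ∈ ball (0 : ℂ) 1, f w + 1 ≠ 0 := by
    intro w hw h
    have : (f w + 1).re = 0 := by rw [h]; simp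
    have h1 : (f w).re + 1 = 0 := by simpa using this
    have := hre w hw
    linarith
  have hφdiff : DifferentiableOn ℂ φ (ball (0 : ℂ) 1) :=
    DifferentiableOn.div (hdiff.sub (differentiableOn_const 1))
      (hdiff.add (differentiableOn_const 1)) hne
  have hφlt : ∀ w ∈ ball (0 : ℂ) 1, ‖φ w‖ < 1 := by
    intro w hw
    have h2 : Complex.normSq (f w + 1) - Complex.normSq (f w - 1) = 4 * (f w).re := by
      simp [Complex.normSq_apply, Complex.add_re, Complex.add_im, Complex.sub_re,
        Complex.sub_im]
      ring
    have h3 : Complex.normSq (f w - 1) < Complex.normSq (f w + 1) := by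
      have := hre w hw; linarith
    have h4 : ‖f w - 1‖ < ‖f w + 1‖ := by
      have e1 : ‖f w - 1‖ ^ 2 = Complex.normSq (f w - 1) := by
        exact Complex.sq_norm _
      have e2 : ‖f w + 1‖ ^ 2 = Complex.normSq (f w + 1) := by
        exact Complex.sq_norm _
      nlinarith [norm_nonneg (f w - 1), norm_nonneg (f w + 1)]
    rw [hφ]
    simp only [norm_div]
    rw [div_lt_one (lt_of_le_of_lt (norm_nonneg _) h4)]
    exact h4
  have hφmaps : Set.MapsTo φ (ball (0 : ℂ) 1) (ball (0 : ℂ) 1) := by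
    intro w hw
    simpa [mem_ball, dist_eq_norm] using hφlt w hw
  have hφ0 : φ 0 = 0 := by simp [hφ, hf0]
  have hschwarz : ‖φ z‖ ≤ ‖z‖ :=
    Complex.norm_le_norm_of_mapsTo_ball hφdiff (hφmaps.mono_right ball_subset_closedBall) hφ0
      (by exact hz)
  have hφz : ‖φ z‖ ≤ ‖z‖ := hschwarz
  -- recover f from φ
  have hfz : f z = (1 + φ z) / (1 - φ z) := by
    have hne' := hne z hzball
    rw [hφ]
    field_simp
    ring
  have hφz1 : ‖φ z‖ < 1 := lt_of_le_of_lt hφz hz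
  have hden : 0 < 1 - ‖φ z‖ := by linarith
  have hnum : ‖1 + φ z‖ ≤ 1 + ‖φ z‖ := by
    calc ‖1 + φ z‖ ≤ ‖(1 : ℂ)‖ + ‖φ z‖ := norm_add_le _ _
      _ = 1 + ‖φ z‖ := by simp
  have hden2 : 1 - ‖φ z‖ ≤ ‖1 - φ z‖ := by
    calc 1 - ‖φ z‖ = ‖(1 : ℂ)‖ - ‖φ z‖ := by simp
      _ ≤ ‖1 - φ z‖ := norm_sub_norm_le _ _
  have hden3 : (0 : ℝ) < ‖1 - φ z‖ := lt_of_lt_of_le hden hden2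
  rw [hfz, norm_div]
  have step1 : ‖1 + φ z‖ / ‖1 - φ z‖ ≤ (1 + ‖φ z‖) / (1 - ‖φ z‖) := by
    rw [div_le_div_iff₀ hden3 hden]
    nlinarith [norm_nonneg (1 + φ z)]
  have step2 : (1 + ‖φ z‖) / (1 - ‖φ z‖) ≤ (1 + ‖z‖) / (1 - ‖z‖) := by
    rw [div_le_div_iff₀ hden (by linarith)]
    nlinarith
  linarith

theorem one_le_ratio {t : ℝ} (ht0 : 0 ≤ t) (ht1 : t < 1) : (1 : ℝ) ≤ (1 + t) / (1 - t) := by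
  rw [le_div_iff₀ (by linarith)]
  nlinarith

end SchwarzFacts

section Polar
variable {n : ℕ}


lemma conjTranspose_mul_self_apply (M : Matrix (Fin n) (Fin n) ℂ) (i j : Fin n) :
    (Mᴴ * M) i j = ∑ k, (starRingEnd ℂ) (M k i) * M k j := by
  simp [Matrix.mul_apply, Matrix.conjTranspose_apply]

noncomputable def psdSqrt {P : Matrix (Fin n) (Fin n) ℂ} (hP : P.IsHermitian) :
    Matrix (Fin n) (Fin n) ℂ :=
  hP.eigenvectorUnitary.1 * Matrix.diagonal (((↑) : ℝ → ℂ) ∘ (√·) ∘ hP.eigenvalues) *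
    (star hP.eigenvectorUnitary : Matrix (Fin n) (Fin n) ℂ)

theorem psdSqrt_posSemidef {P : Matrix (Fin n) (Fin n) ℂ} (hP : P.IsHermitian) :
    (psdSqrt hP).PosSemidef := by
  have hd : (Matrix.diagonal (((↑) : ℝ → ℂ) ∘ (√·) ∘ hP.eigenvalues)).PosSemidef := by
    rw [Matrix.posSemidef_diagonal_iff]
    intro i
    simp only [Function.comp_apply]
    exact Complex.zero_le_real.mpr (Real.sqrt_nonneg _)
  have := hd.mul_mul_conjTranspose_same (hP.eigenvectorUnitary.1)
  rw [psdSqrt]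
  rwa [← Matrix.star_eq_conjTranspose] at this

theorem psdSqrt_mul_self {P : Matrix (Fin n) (Fin n) ℂ} (hP : P.PosSemidef) :
    psdSqrt hP.1 * psdSqrt hP.1 = P := by
  have hU : star (hP.1.eigenvectorUnitary.1) * hP.1.eigenvectorUnitary.1 = 1 :=
    Matrix.mem_unitaryGroup_iff'.mp hP.1.eigenvectorUnitary.2
  have hD : Matrix.diagonal (((↑) : ℝ → ℂ) ∘ (√·) ∘ hP.1.eigenvalues) *
      Matrix.diagonal (((↑) : ℝ → ℂ) ∘ (√·) ∘ hP.1.eigenvalues) =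
      Matrix.diagonal (RCLike.ofReal ∘ hP.1.eigenvalues) := by
    rw [Matrix.diagonal_mul_diagonal]
    congr 1
    funext i
    simp only [Function.comp_apply]
    rw [← Complex.ofReal_mul, Real.mul_self_sqrt (hP.eigenvalues_nonneg i)]
    rfl
  conv_rhs => rw [hP.1.spectral_theorem, Unitary.conjStarAlgAut_apply]
  rw [psdSqrt]
  calc _ = hP.1.eigenvectorUnitary.1 * Matrix.diagonal (((↑) : ℝ → ℂ) ∘ (√·) ∘ hP.1.eigenvalues) *
        (star (hP.1.eigenvectorUnitary.1) * hP.1.eigenvectorUnitary.1) *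
        Matrix.diagonal (((↑) : ℝ → ℂ) ∘ (√·) ∘ hP.1.eigenvalues) *
        star (hP.1.eigenvectorUnitary.1) := by simp only [Matrix.mul_assoc]
    _ = _ := by rw [hU, Matrix.mul_one,
        Matrix.mul_assoc _ (Matrix.diagonal _) (Matrix.diagonal _), hD]

theorem matAbs_posSemidef (X : Matrix (Fin n) (Fin n) ℂ) : (matAbs X).PosSemidef :=
  psdSqrt_posSemidef _

theorem matAbs_mul_self (X : Matrix (Fin n) (Fin n) ℂ) :
    matAbs X * matAbs X = Xᴴ * X :=
  psdSqrt_mul_self (Matrix.posSemidef_conjTranspose_mul_self X)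

lemma sandwich_sq {V P : Matrix (Fin n) (Fin n) ℂ} (hVVs : V * star V = 1) :
    star V * (P * P) * V = (star V * P * V) * (star V * P * V) := by
  have : star V * P * V * (star V * P * V) = star V * P * (V * star V) * P * V := by
    simp only [Matrix.mul_assoc]
  rw [this, hVVs, Matrix.mul_one]
  simp only [Matrix.mul_assoc]

theorem polar_aux {P : Matrix (Fin n) (Fin n) ℂ} (hP : P.PosSemidef)
    (X : Matrix (Fin n) (Fin n) ℂ) (hPmul : P * P = Xᴴ * X) :
    ∃ W ∈ Matrix.unitaryGroup (Fin n) ℂ, X = W * P := by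
  classical
  have hPH : P.IsHermitian := hP.1
  set V : Matrix (Fin n) (Fin n) ℂ := (hPH.eigenvectorUnitary : Matrix (Fin n) (Fin n) ℂ)
    with hVdef
  have hV : V ∈ Matrix.unitaryGroup (Fin n) ℂ := (hPH.eigenvectorUnitary).2
  have hVsV : star V * V = 1 := Matrix.mem_unitaryGroup_iff'.mp hV
  have hVVs : V * star V = 1 := Matrix.mem_unitaryGroup_iff.mp hV
  set μ : Fin n → ℝ := hPH.eigenvalues with hμdef
  set D : Matrix (Fin n) (Fin n) ℂ := Matrix.diagonal (RCLike.ofReal ∘ μ) with hDdef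
  have hspec : star V * P * V = D := by
    have h : P = V * D * star V := by
      rw [hDdef, hμdef, hVdef]
      have := hPH.spectral_theorem
      rwa [Unitary.conjStarAlgAut_apply] at this
    rw [h, Matrix.mul_assoc, Matrix.mul_assoc, hVsV, Matrix.mul_one, ← Matrix.mul_assoc, hVsV,
      Matrix.one_mul]
  have hspec' : P = V * D * star V := by
    rw [hDdef, hμdef, hVdef]
    have := hPH.spectral_theorem
    rwa [Unitary.conjStarAlgAut_apply] at this
  clear_value V μ
  -- `star V * (Xᴴ X) * V = D * D`
  have hXXdiag : star V * (Xᴴ * X) * V = D * D := by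
    rw [← hPmul, sandwich_sq hVVs, hspec]
  set dplus : Fin n → ℂ := fun i => if μ i = 0 then 0 else (RCLike.ofReal (μ i) : ℂ)⁻¹
    with hdplusdef
  set M : Matrix (Fin n) (Fin n) ℂ := X * V * Matrix.diagonal dplus with hMdef
  set ind : Fin n → ℂ := fun i => if μ i = 0 then 0 else 1 with hinddef
  -- (X*V)ᴴ * (X*V) = D * D
  have hXV : (X * V)ᴴ * (X * V) = D * D := by
    rw [Matrix.conjTranspose_mul, ← Matrix.mul_assoc, Matrix.mul_assoc Vᴴ Xᴴ X]
    simpa [Matrix.star_eq_conjTranspose] using hXXdiag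
  have hMM : Mᴴ * M = Matrix.diagonal ind := by
    rw [hMdef, Matrix.conjTranspose_mul, Matrix.diagonal_conjTranspose]
    have hstar : star dplus = dplus := by
      funext i
      simp only [Pi.star_apply, hdplusdef, RCLike.star_def]
      split_ifs with h
      · simp
      · rw [map_inv₀, RCLike.conj_ofReal]
    rw [hstar]
    calc Matrix.diagonal dplus * (X * V)ᴴ * (X * V * Matrix.diagonal dplus)
        = Matrix.diagonal dplus * ((X * V)ᴴ * (X * V)) * Matrix.diagonal dplus := by
          simp only [Matrix.mul_assoc]
      _ = Matrix.diagonal dplus * (D * D) * Matrix.diagonal dplus := by rw [hXV]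
      _ = Matrix.diagonal ind := by
          rw [hDdef, Matrix.diagonal_mul_diagonal, Matrix.diagonal_mul_diagonal,
            Matrix.diagonal_mul_diagonal]
          refine congrArg Matrix.diagonal (funext fun i => ?_)
          simp only [Pi.mul_apply, Function.comp_apply, hdplusdef, hinddef]
          split_ifs with h
          · simp
          · have hne : (RCLike.ofReal (μ i) : ℂ) ≠ 0 := by
              simpa using h
            field_simp
  -- columns of M, as elements of Euclidean space
  set mcol : Fin n → EuclideanSpace ℂ (Fin n) :=
    fun i => (WithLp.equiv 2 (Fin n → ℂ)).symm (fun k => M k i) with hmcoldef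
  have hinner : ∀ i j, @inner ℂ _ _ (mcol i) (mcol j) = (Mᴴ * M) i j := by
    intro i j
    rw [PiLp.inner_apply, conjTranspose_mul_self_apply]
    congr 1
    funext k
    rw [RCLike.inner_apply, mul_comm]
    rfl
  set J : Set (Fin n) := {i | μ i ≠ 0} with hJdef
  have horth : Orthonormal ℂ (J.restrict mcol) := by
    rw [orthonormal_iff_ite]
    intro i j
    rw [show J.restrict mcol i = mcol i from rfl, show J.restrict mcol j = mcol j from rfl, hinner, hMM]
    rcases eq_or_ne i j with rfl | hij
    · have h1 : ind (i : Fin n) = 1 := by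
        simp only [hinddef]
        rw [if_neg i.2]
      rw [Matrix.diagonal_apply_eq, h1, if_pos rfl]
    · have : (i : Fin n) ≠ (j : Fin n) := fun h => hij (Subtype.ext h)
      rw [Matrix.diagonal_apply_ne _ this, if_neg hij]
  have hcard : Module.finrank ℂ (EuclideanSpace ℂ (Fin n)) = Fintype.card (Fin n) := by
    simp [finrank_euclideanSpace]
  obtain ⟨b, hb⟩ := horth.exists_orthonormalBasis_extension_of_card_eq hcard
  set Y : Matrix (Fin n) (Fin n) ℂ := Matrix.of (fun k i => b i k) with hYdef
  have hYmem : Y ∈ Matrix.unitaryGroup (Fin n) ℂ := by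
    rw [Matrix.mem_unitaryGroup_iff']
    ext i j
    rw [show star Y = Yᴴ from rfl, conjTranspose_mul_self_apply]
    have hbij := (orthonormal_iff_ite.mp b.orthonormal) i j
    rw [PiLp.inner_apply] at hbij
    simp only [RCLike.inner_apply] at hbij
    rw [show ∑ k, (starRingEnd ℂ) (Y k i) * Y k j = ∑ k, (starRingEnd ℂ) (b i k) * b j k
      from rfl]
    rw [Matrix.one_apply, ← hbij]
    exact Finset.sum_congr rfl (fun _ _ => mul_comm _ _)
  -- main claim : Y * D = X * V
  have hYD : Y * D = X * V := by
    ext k i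
    rw [Matrix.mul_diagonal]
    by_cases hμi : μ i = 0
    · -- column i of X * V is zero
      have hcolzero : ∀ k', (X * V) k' i = 0 := by
        have hdot : star (fun k' => (X * V) k' i) ⬝ᵥ (fun k' => (X * V) k' i) = 0 := by
          have hXVii : ((X * V)ᴴ * (X * V)) i i = 0 := by
            rw [hXV, hDdef, Matrix.diagonal_mul_diagonal, Matrix.diagonal_apply_eq]
            simp [hμi]
          rw [conjTranspose_mul_self_apply] at hXVii
          simpa [dotProduct, Pi.star_apply, RCLike.star_def] using hXVii
        have := dotProduct_star_self_eq_zero.mp hdot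
        intro k'
        exact congrFun this k'
      rw [hcolzero k]
      simp [Function.comp_apply, hμi]
    · -- column i of Y is column i of M
      have hbi : b i = mcol i := hb i hμi
      have hYki : Y k i = M k i := by
        rw [hYdef]
        show b i k = M k i
        rw [hbi]
        rfl
      rw [hYki, hMdef]
      rw [Matrix.mul_diagonal]
      simp only [Function.comp_apply, hdplusdef, if_neg hμi]
      have hne : (RCLike.ofReal (μ i) : ℂ) ≠ 0 := by simpa using hμi
      field_simp
  refine ⟨Y * star V, ?_, ?_⟩
  · exact mul_mem hYmem (Unitary.star_mem hV)
  · calc X = X * (V * star V) := by rw [hVVs, Matrix.mul_one]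
      _ = (X * V) * star V := by rw [Matrix.mul_assoc]
      _ = (Y * D) * star V := by rw [hYD]
      _ = (Y * star V) * (V * D * star V) := by
          have h5 : star V * (V * D * star V) = D * star V := by
            rw [← Matrix.mul_assoc, ← Matrix.mul_assoc (star V) V D, hVsV, Matrix.one_mul]
          rw [Matrix.mul_assoc Y (star V) (V * D * star V), h5, Matrix.mul_assoc]
      _ = (Y * star V) * P := by rw [← hspec']

theorem exists_unitary_polar (X : Matrix (Fin n) (Fin n) ℂ) :
    ∃ W ∈ Matrix.unitaryGroup (Fin n) ℂ, X = W * matAbs X :=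
  polar_aux (matAbs_posSemidef X) X (matAbs_mul_self X)

end Polar

section Contraction
variable {n : ℕ}

/-- eigenvalue bound from contraction property -/
theorem eigenvalues_abs_le_one {K : Matrix (Fin n) (Fin n) ℂ}
    (hK : (1 - Kᴴ * K).PosSemidef) (i : Fin n) :
    |(matAbs_posSemidef K).1.eigenvalues i| ≤ 1 := by
  set P := matAbs K with hPdef
  have hP : P.PosSemidef := matAbs_posSemidef K
  have hPH : P.IsHermitian := hP.1
  set μ : Fin n → ℝ := hPH.eigenvalues with hμdef
  have hμ0 : 0 ≤ μ i := hP.eigenvalues_nonneg i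
  set v : EuclideanSpace ℂ (Fin n) := hPH.eigenvectorBasis i with hvdef
  have hPv : P *ᵥ ⇑v = μ i • ⇑v := hPH.mulVec_eigenvectorBasis i
  have hPPv : (P * P) *ᵥ ⇑v = (((μ i : ℝ) ^ 2 : ℝ)) • ⇑v := by
    rw [← Matrix.mulVec_mulVec, hPv]
    rw [show (μ i • ⇑v : Fin n → ℂ) = ((μ i : ℂ)) • ⇑v from by
      funext k; simp [Complex.real_smul]]
    rw [Matrix.mulVec_smul, hPv]
    funext k
    push_cast
    simp [Complex.real_smul]
    ring
  have hinner1 : dotProduct (star (⇑v)) (⇑v) = 1 := by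
    have h1 : @inner ℂ _ _ v v = ((‖v‖ : ℂ)) ^ 2 := inner_self_eq_norm_sq_to_K v
    have h2 : ‖v‖ = 1 := hPH.eigenvectorBasis.orthonormal.1 i
    rw [h2] at h1
    rw [EuclideanSpace.inner_eq_star_dotProduct] at h1
    simpa [dotProduct_comm] using h1
  have hquad := hK.dotProduct_mulVec_nonneg (⇑v)
  rw [show (1 - Kᴴ * K) = 1 - P * P from by rw [hPdef, matAbs_mul_self]] at hquad
  rw [Matrix.sub_mulVec, Matrix.one_mulVec, hPPv] at hquad
  have hdot : dotProduct (star (⇑v)) (⇑v - ((μ i ^ 2 : ℝ)) • ⇑v)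
      = ((1 - μ i ^ 2 : ℝ) : ℂ) := by
    rw [dotProduct_sub, hinner1]
    rw [show ((μ i ^ 2 : ℝ)) • (⇑v : Fin n → ℂ) = (((μ i ^ 2 : ℝ) : ℂ)) • ⇑v from by
      funext k; simp [Complex.real_smul]]
    rw [dotProduct_smul, hinner1]
    push_cast
    simp
  rw [hdot] at hquad
  rw [Complex.zero_le_real] at hquad
  rw [abs_le]
  constructor <;> nlinarith

theorem contraction_avg {K : Matrix (Fin n) (Fin n) ℂ}
    (hK : (1 - Kᴴ * K).PosSemidef) :
    ∃ U₁ ∈ Matrix.unitaryGroup (Fin n) ℂ, ∃ U₂ ∈ Matrix.unitaryGroup (Fin n) ℂ,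
      K = (1 / 2 : ℂ) • (U₁ + U₂) := by
  classical
  set P := matAbs K with hPdef
  have hP : P.PosSemidef := matAbs_posSemidef K
  have hPH : P.IsHermitian := hP.1
  obtain ⟨W, hW, hKW⟩ := polar_aux hP K (matAbs_mul_self K)
  set V : Matrix (Fin n) (Fin n) ℂ := (hPH.eigenvectorUnitary : Matrix (Fin n) (Fin n) ℂ)
    with hVdef
  have hV : V ∈ Matrix.unitaryGroup (Fin n) ℂ := (hPH.eigenvectorUnitary).2
  set μ : Fin n → ℝ := hPH.eigenvalues with hμdef
  have hspec' : P = V * Matrix.diagonal (RCLike.ofReal ∘ μ) * star V := by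
    have := hPH.spectral_theorem
    rwa [Unitary.conjStarAlgAut_apply] at this
  have hbound : ∀ i, ‖(RCLike.ofReal (μ i) : ℂ)‖ ≤ 1 := by
    intro i
    rw [show ((RCLike.ofReal (μ i) : ℂ)) = ((μ i : ℝ) : ℂ) from rfl]
    rw [Complex.norm_real, Real.norm_eq_abs]
    exact eigenvalues_abs_le_one hK i
  choose u w hu hw huw using fun i =>
    exists_unit_decomp one_pos (RCLike.ofReal (μ i) : ℂ) (hbound i)
  have hdiag : Matrix.diagonal (RCLike.ofReal ∘ μ) =
      (1 / 2 : ℂ) • (Matrix.diagonal u + Matrix.diagonal w) := by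
    ext i j
    rcases eq_or_ne i j with rfl | hij
    · simp only [Matrix.diagonal_apply_eq, Matrix.smul_apply, Matrix.add_apply,
        Function.comp_apply, smul_eq_mul]
      have := huw i
      rw [show ((1 : ℝ) / 2 : ℂ) = (1 / 2 : ℂ) from by norm_num] at this
      rw [this]
    · simp [Matrix.diagonal_apply_ne _ hij]
  refine ⟨W * V * Matrix.diagonal u * star V, ?_, W * V * Matrix.diagonal w * star V, ?_, ?_⟩
  · exact mul_mem (mul_mem (mul_mem hW hV) (diag_mem_unitary hu)) (Unitary.star_mem hV)
  · exact mul_mem (mul_mem (mul_mem hW hV) (diag_mem_unitary hw)) (Unitary.star_mem hV)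
  · rw [hKW, hspec', hdiag]
    rw [Matrix.mul_smul, Matrix.smul_mul, Matrix.mul_smul]
    congr 1
    simp only [Matrix.mul_add, Matrix.add_mul]
    simp only [Matrix.mul_assoc]

end Contraction

section Mono
variable {n : ℕ} {N : Matrix (Fin n) (Fin n) ℂ → ℝ}

theorem N_unitary_conj (hN : IsUnitarilyInvariantNorm N) {U V : Matrix (Fin n) (Fin n) ℂ}
    (hU : U ∈ Matrix.unitaryGroup (Fin n) ℂ) (hV : V ∈ Matrix.unitaryGroup (Fin n) ℂ)
    (S : Matrix (Fin n) (Fin n) ℂ) : N (U * S * Vᴴ) = N S := by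
  have := hN.2.2.2 ⟨U, hU⟩ ⟨star V, Unitary.star_mem hV⟩ S
  simpa [Matrix.star_eq_conjTranspose] using this

theorem N_conj_le (hN : IsUnitarilyInvariantNorm N) {K S : Matrix (Fin n) (Fin n) ℂ}
    (hK : (1 - Kᴴ * K).PosSemidef) : N (K * S * Kᴴ) ≤ N S := by
  obtain ⟨U₁, hU₁, U₂, hU₂, hKdec⟩ := contraction_avg hK
  have hKH : Kᴴ = (1 / 2 : ℂ) • (U₁ᴴ + U₂ᴴ) := by
    rw [hKdec, Matrix.conjTranspose_smul, Matrix.conjTranspose_add]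
    congr 1
    simp
  have hexp : K * S * Kᴴ = (1 / 4 : ℂ) •
      (U₁ * S * U₁ᴴ + U₁ * S * U₂ᴴ + U₂ * S * U₁ᴴ + U₂ * S * U₂ᴴ) := by
    rw [hKH, hKdec, Matrix.smul_mul, Matrix.smul_mul, Matrix.mul_smul, smul_smul]
    rw [show ((1 : ℂ) / 2) * (1 / 2) = 1 / 4 from by norm_num]
    congr 1
    simp only [Matrix.add_mul, Matrix.mul_add]
    abel
  rw [hexp, hN.2.1]
  have hq : ‖((1 : ℂ) / 4)‖ = 1 / 4 := by norm_num
  rw [hq]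
  have h1 : N (U₁ * S * U₁ᴴ) = N S := N_unitary_conj hN hU₁ hU₁ S
  have h2 : N (U₁ * S * U₂ᴴ) = N S := N_unitary_conj hN hU₁ hU₂ S
  have h3 : N (U₂ * S * U₁ᴴ) = N S := N_unitary_conj hN hU₂ hU₁ S
  have h4 : N (U₂ * S * U₂ᴴ) = N S := N_unitary_conj hN hU₂ hU₂ S
  have t1 := hN.2.2.1 (U₁ * S * U₁ᴴ + U₁ * S * U₂ᴴ + U₂ * S * U₁ᴴ) (U₂ * S * U₂ᴴ)
  have t2 := hN.2.2.1 (U₁ * S * U₁ᴴ + U₁ * S * U₂ᴴ) (U₂ * S * U₁ᴴ)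
  have t3 := hN.2.2.1 (U₁ * S * U₁ᴴ) (U₁ * S * U₂ᴴ)
  rw [h1, h2, h3, h4] at *
  linarith

theorem N_psd_mono (hN : IsUnitarilyInvariantNorm N) {P Q : Matrix (Fin n) (Fin n) ℂ}
    (hP : P.PosSemidef) (hQ : Q.PosSemidef) : N P ≤ N (P + Q) := by
  classical
  set S : Matrix (Fin n) (Fin n) ℂ := P + Q with hSdef
  have hS : S.PosSemidef := hP.add hQ
  have hSH : S.IsHermitian := hS.1
  set V : Matrix (Fin n) (Fin n) ℂ := (hSH.eigenvectorUnitary : Matrix (Fin n) (Fin n) ℂ)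
    with hVdef
  have hV : V ∈ Matrix.unitaryGroup (Fin n) ℂ := (hSH.eigenvectorUnitary).2
  have hVsV : star V * V = 1 := Matrix.mem_unitaryGroup_iff'.mp hV
  have hVVs : V * star V = 1 := Matrix.mem_unitaryGroup_iff.mp hV
  set σ : Fin n → ℝ := hSH.eigenvalues with hσdef
  have hσ0 : ∀ i, 0 ≤ σ i := fun i => hS.eigenvalues_nonneg i
  have hspec' : S = V * Matrix.diagonal (RCLike.ofReal ∘ σ) * star V := by
    have := hSH.spectral_theorem
    rwa [Unitary.conjStarAlgAut_apply] at this
  clear_value V σ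
  -- sandwich multiplication lemma
  have hsand : ∀ a b : Fin n → ℂ,
      (V * Matrix.diagonal a * star V) * (V * Matrix.diagonal b * star V)
        = V * Matrix.diagonal (fun i => a i * b i) * star V := by
    intro a b
    calc (V * Matrix.diagonal a * star V) * (V * Matrix.diagonal b * star V)
        = V * Matrix.diagonal a * (star V * V) * Matrix.diagonal b * star V := by
          simp only [Matrix.mul_assoc]
      _ = V * Matrix.diagonal (fun i => a i * b i) * star V := by
          rw [hVsV, Matrix.mul_one, Matrix.mul_assoc V, Matrix.diagonal_mul_diagonal]
  have hconjH : ∀ a : Fin n → ℂ, star a = a →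
      (V * Matrix.diagonal a * star V)ᴴ = V * Matrix.diagonal a * star V := by
    intro a ha
    rw [Matrix.conjTranspose_mul, Matrix.conjTranspose_mul, Matrix.diagonal_conjTranspose, ha]
    rw [show (star V : Matrix (Fin n) (Fin n) ℂ)ᴴ = V from by
      rw [Matrix.star_eq_conjTranspose, Matrix.conjTranspose_conjTranspose]]
    rw [show (Vᴴ : Matrix (Fin n) (Fin n) ℂ) = star V from rfl]
    rw [← Matrix.mul_assoc]
  set r : Fin n → ℂ := fun i => if σ i = 0 then 0 else ((Real.sqrt (σ i) : ℝ) : ℂ)⁻¹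
    with hrdef
  have hrstar : star r = r := by
    funext i
    simp only [Pi.star_apply, hrdef, RCLike.star_def]
    split_ifs with h
    · simp
    · rw [map_inv₀, Complex.conj_ofReal]
  set ind : Fin n → ℂ := fun i => if σ i = 0 then 0 else 1 with hinddef
  have hindstar : star ind = ind := by
    funext i
    simp only [Pi.star_apply, hinddef, RCLike.star_def]
    split_ifs with h
    · simp
    · simp
  set R : Matrix (Fin n) (Fin n) ℂ := V * Matrix.diagonal r * star V with hRdef
  set Pi' : Matrix (Fin n) (Fin n) ℂ := V * Matrix.diagonal ind * star V with hPidef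
  have hRH : Rᴴ = R := hconjH r hrstar
  have hPiH : Pi'ᴴ = Pi' := hconjH ind hindstar
  -- R * S * R = Pi'
  have hRSR : R * S * R = Pi' := by
    have key : (fun i => r i * (RCLike.ofReal ∘ σ) i * r i) = ind := by
      funext i
      simp only [Function.comp_apply, hrdef, hinddef]
      split_ifs with h
      · simp
      · have h1 : Real.sqrt (σ i) ≠ 0 := by
          intro hh
          apply h
          have hsq := Real.sq_sqrt (hσ0 i)
          rw [hh] at hsq
          simpa using hsq.symm
        have h2 : ((Real.sqrt (σ i) : ℝ) : ℂ) ≠ 0 := by exact_mod_cast h1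
        have h3 : ((σ i : ℝ) : ℂ) = ((Real.sqrt (σ i) : ℝ) : ℂ) * ((Real.sqrt (σ i) : ℝ) : ℂ) := by
          rw [← Complex.ofReal_mul, Real.mul_self_sqrt (hσ0 i)]
        rw [show ((RCLike.ofReal (σ i)) : ℂ) = ((σ i : ℝ) : ℂ) from rfl, h3]
        field_simp
    rw [hRdef, hspec']
    simp only [hsand]
    rw [key, ← hPidef]
  -- Pi' * S = S
  have hPiS : Pi' * S = S := by
    have key : (fun i => ind i * (RCLike.ofReal ∘ σ) i) = RCLike.ofReal ∘ σ := by
      funext i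
      simp only [Function.comp_apply, hinddef]
      split_ifs with h
      · simp [h]
      · simp
    rw [hPidef]
    conv_lhs => rw [hspec']
    simp only [hsand]
    rw [key, ← hspec']
  -- (1 - Pi') is PSD ;  1 - Pi' = V * diagonal (1 - ind) * star V
  have hone : (1 : Matrix (Fin n) (Fin n) ℂ) = V * Matrix.diagonal (fun _ => (1 : ℂ)) * star V := by
    rw [Matrix.diagonal_one, Matrix.mul_one, hVVs]
  have honePi : (1 : Matrix (Fin n) (Fin n) ℂ) - Pi'
      = V * Matrix.diagonal (fun i => 1 - ind i) * star V := by
    rw [hPidef]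
    conv_lhs => rw [hone]
    rw [show Matrix.diagonal (fun i => 1 - ind i)
        = Matrix.diagonal (fun _ => (1:ℂ)) - Matrix.diagonal ind from by
      rw [Matrix.diagonal_sub]]
    rw [Matrix.mul_sub, Matrix.sub_mul]
  have honePiPSD : ((1 : Matrix (Fin n) (Fin n) ℂ) - Pi').PosSemidef := by
    rw [honePi]
    have hdiagPSD : (Matrix.diagonal (fun i => 1 - ind i)).PosSemidef := by
      rw [Matrix.posSemidef_diagonal_iff]
      intro i
      simp only [hinddef]
      split_ifs with h
      · norm_num
      · norm_num
    have := hdiagPSD.mul_mul_conjTranspose_same V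
    rwa [show Vᴴ = star V from rfl] at this
  -- sqrt of P
  set T : Matrix (Fin n) (Fin n) ℂ := psdSqrt hP.1 with hTdef
  have hTT : T * T = P := psdSqrt_mul_self hP
  have hTH : T.IsHermitian := (psdSqrt_posSemidef hP.1).1
  -- (1 - Pi') * S = 0
  have hPiS0 : ((1 : Matrix (Fin n) (Fin n) ℂ) - Pi') * S = 0 := by
    rw [Matrix.sub_mul, Matrix.one_mul, hPiS, sub_self]
  -- Z := T * (1 - Pi') = 0
  have hZ : T * ((1 : Matrix (Fin n) (Fin n) ℂ) - Pi') = 0 := by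
    set E : Matrix (Fin n) (Fin n) ℂ := (1 : Matrix (Fin n) (Fin n) ℂ) - Pi' with hEdef
    have hEH : Eᴴ = E := by
      rw [hEdef, Matrix.conjTranspose_sub, hPiH, Matrix.conjTranspose_one]
    set Z : Matrix (Fin n) (Fin n) ℂ := T * E with hZdef
    have hZZ : Zᴴ * Z = E * P * E := by
      rw [hZdef, Matrix.conjTranspose_mul, hEH, hTH.eq]
      calc E * T * (T * E) = E * (T * T) * E := by simp only [Matrix.mul_assoc]
        _ = E * P * E := by rw [hTT]
    -- E * S * E = 0
    have hESE : E * S * E = 0 := by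
      rw [hEdef, hPiS0, Matrix.zero_mul]
    -- E P E = - E Q E
    have hEPE : E * P * E = - (E * Q * E) := by
      have : E * P * E + E * Q * E = E * S * E := by
        rw [hSdef, Matrix.mul_add, Matrix.add_mul]
      rw [hESE] at this
      exact eq_neg_of_add_eq_zero_left this
    have hEPEpsd : (E * P * E).PosSemidef := by
      have := hP.conjTranspose_mul_mul_same E
      rwa [hEH] at this
    have hEQEpsd : (E * Q * E).PosSemidef := by
      have := hQ.conjTranspose_mul_mul_same E
      rwa [hEH] at this
    -- quadratic form of Zᴴ Z vanishes
    have hZv : ∀ x : Fin n → ℂ, Z *ᵥ x = 0 := by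
      intro x
      have h1 : 0 ≤ dotProduct (star x) ((E * P * E) *ᵥ x) := hEPEpsd.dotProduct_mulVec_nonneg x
      have h2 : 0 ≤ dotProduct (star x) ((E * Q * E) *ᵥ x) := hEQEpsd.dotProduct_mulVec_nonneg x
      have h3 : dotProduct (star x) ((E * P * E) *ᵥ x)
          = - dotProduct (star x) ((E * Q * E) *ᵥ x) := by
        rw [hEPE]
        rw [Matrix.neg_mulVec, dotProduct_neg]
      have h4 : dotProduct (star x) ((E * P * E) *ᵥ x) = 0 :=
        le_antisymm (by rw [h3]; exact neg_nonpos.mpr h2) h1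
      have h5 : dotProduct (star (Z *ᵥ x)) (Z *ᵥ x) = 0 := by
        calc dotProduct (star (Z *ᵥ x)) (Z *ᵥ x)
            = dotProduct (Matrix.vecMul (star x) Zᴴ) (Z *ᵥ x) := by
              rw [Matrix.star_mulVec]
          _ = dotProduct (star x) (Zᴴ *ᵥ (Z *ᵥ x)) :=
              (Matrix.dotProduct_mulVec _ _ _).symm
          _ = dotProduct (star x) ((Zᴴ * Z) *ᵥ x) := by rw [Matrix.mulVec_mulVec]
          _ = dotProduct (star x) ((E * P * E) *ᵥ x) := by rw [hZZ]
          _ = 0 := h4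
      exact dotProduct_star_self_eq_zero.mp h5
    ext i j
    have := congrFun (hZv (Pi.single j 1)) i
    rw [Matrix.mulVec_single] at this
    simpa using this
  have hTPi : T * Pi' = T := by
    have := hZ
    rw [Matrix.mul_sub, Matrix.mul_one, sub_eq_zero] at this
    exact this.symm
  have hPiT : Pi' * T = T := by
    have h := congrArg Matrix.conjTranspose hTPi
    rw [Matrix.conjTranspose_mul, hPiH, hTH.eq] at h
    exact h
  -- K := T * R  satisfies K S Kᴴ = P and 1 - KᴴK psd
  set K : Matrix (Fin n) (Fin n) ℂ := T * R with hKdef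
  have hKH : Kᴴ = R * T := by
    rw [hKdef, Matrix.conjTranspose_mul, hRH, hTH.eq]
  have hKSK : K * S * Kᴴ = P := by
    rw [hKdef, hKH]
    calc T * R * S * (R * T) = T * (R * S * R) * T := by simp only [Matrix.mul_assoc]
      _ = T * Pi' * T := by rw [hRSR]
      _ = T * T := by rw [hTPi]
      _ = P := hTT
  have hKK : Kᴴ * K = R * P * R := by
    rw [hKH, hKdef]
    calc R * T * (T * R) = R * (T * T) * R := by simp only [Matrix.mul_assoc]
      _ = R * P * R := by rw [hTT]
  have hcontr : ((1 : Matrix (Fin n) (Fin n) ℂ) - Kᴴ * K).PosSemidef := by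
    have hsplit : (1 : Matrix (Fin n) (Fin n) ℂ) - Kᴴ * K
        = ((1 : Matrix (Fin n) (Fin n) ℂ) - Pi') + R * Q * R := by
      rw [hKK]
      have : Pi' = R * P * R + R * Q * R := by
        rw [← hRSR, hSdef]
        rw [Matrix.mul_add, Matrix.add_mul]
      rw [this]
      abel
    rw [hsplit]
    refine honePiPSD.add ?_
    have := hQ.conjTranspose_mul_mul_same R
    rwa [hRH] at this
  calc N P = N (K * S * Kᴴ) := by rw [hKSK]
    _ ≤ N S := N_conj_le hN hcontr
    _ = N (P + Q) := by rw [hSdef]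

end Mono


section DDist

lemma dDist_le_aux {n : ℕ} {A : Matrix (Fin n) (Fin n) ℂ} (hA : A.IsHermitian) (i : Fin n) :
    dDist hA ≤ 1 - |hA.eigenvalues i| := by
  have : Nonempty (Fin n) := ⟨i⟩
  exact ciInf_le (Set.Finite.bddBelow (Set.finite_range _)) i

lemma dDist_pos {n : ℕ} (hn : 1 ≤ n) {A : Matrix (Fin n) (Fin n) ℂ} (hA : A.IsHermitian)
    (hAspec : ∀ i, |hA.eigenvalues i| < 1) : 0 < dDist hA := by
  have : Nonempty (Fin n) := Fin.pos_iff_nonempty.mp hn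
  obtain ⟨i, hi⟩ := exists_eq_ciInf_of_finite (f := fun i => 1 - |hA.eigenvalues i|)
  rw [dDist, ← hi]
  linarith [hAspec i]

lemma dDist_le_one {n : ℕ} (hn : 1 ≤ n) {A : Matrix (Fin n) (Fin n) ℂ} (hA : A.IsHermitian) :
    dDist hA ≤ 1 := by
  have i0 : Fin n := ⟨0, hn⟩
  refine le_trans (dDist_le_aux hA i0) ?_
  linarith [abs_nonneg (hA.eigenvalues i0)]

end DDist

section HerFunBound

variable {n : ℕ} {N : Matrix (Fin n) (Fin n) ℂ → ℝ}

lemma N_herFun_mul_le (hN : IsUnitarilyInvariantNorm N) {A : Matrix (Fin n) (Fin n) ℂ}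
    (hA : A.IsHermitian) {f : ℂ → ℂ} {c : ℝ} (hc : 0 < c)
    (hfc : ∀ i, ‖f ((hA.eigenvalues i : ℝ) : ℂ)‖ ≤ c) (X : Matrix (Fin n) (Fin n) ℂ) :
    N (herFun hA f * X) ≤ c * N X := by
  set U : Matrix (Fin n) (Fin n) ℂ := (hA.eigenvectorUnitary : Matrix (Fin n) (Fin n) ℂ)
    with hUdef
  have hU : U ∈ Matrix.unitaryGroup (Fin n) ℂ := (hA.eigenvectorUnitary).2
  have hUs : star U ∈ Matrix.unitaryGroup (Fin n) ℂ := Unitary.star_mem hU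
  have h1 : herFun hA f * X =
      U * (Matrix.diagonal (fun i => f ((hA.eigenvalues i : ℝ) : ℂ)) * (star U * X)) := by
    unfold herFun
    simp only [Matrix.mul_assoc, hUdef]
  rw [h1, N_U_mul hN hU]
  calc N (Matrix.diagonal (fun i => f ((hA.eigenvalues i : ℝ) : ℂ)) * (star U * X))
      ≤ c * N (star U * X) := N_diag_mul_le hN hc hfc _
    _ = c * N X := by rw [N_U_mul hN hUs]

lemma N_mul_herFun_le (hN : IsUnitarilyInvariantNorm N) {B : Matrix (Fin n) (Fin n) ℂ}
    (hB : B.IsHermitian) {g : ℂ → ℂ} {c : ℝ} (hc : 0 < c)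
    (hgc : ∀ i, ‖g ((hB.eigenvalues i : ℝ) : ℂ)‖ ≤ c) (X : Matrix (Fin n) (Fin n) ℂ) :
    N (X * herFun hB g) ≤ c * N X := by
  set U : Matrix (Fin n) (Fin n) ℂ := (hB.eigenvectorUnitary : Matrix (Fin n) (Fin n) ℂ)
    with hUdef
  have hU : U ∈ Matrix.unitaryGroup (Fin n) ℂ := (hB.eigenvectorUnitary).2
  have hUs : star U ∈ Matrix.unitaryGroup (Fin n) ℂ := Unitary.star_mem hU
  have h1 : X * herFun hB g =
      ((X * U) * Matrix.diagonal (fun i => g ((hB.eigenvalues i : ℝ) : ℂ))) * star U := by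
    unfold herFun
    simp only [Matrix.mul_assoc, hUdef]
  rw [h1, N_mul_U hN hUs]
  calc N ((X * U) * Matrix.diagonal (fun i => g ((hB.eigenvalues i : ℝ) : ℂ)))
      ≤ c * N (X * U) := N_mul_diag_le hN hc hgc _
    _ = c * N X := by rw [N_mul_U hN hU]

end HerFunBound

/-- **Theorem 3.1 (first inequality), Hermitian matrix case.** -/
theorem stmt9 {n : ℕ} (hn : 1 ≤ n)
    {A B : Matrix (Fin n) (Fin n) ℂ} (hA : A.IsHermitian) (hB : B.IsHermitian)
    (hAspec : ∀ i, |hA.eigenvalues i| < 1) (hBspec : ∀ i, |hB.eigenvalues i| < 1)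
    {f g : ℂ → ℂ} (hf : MemH f) (hg : MemH g)
    (X : Matrix (Fin n) (Fin n) ℂ)
    (N : Matrix (Fin n) (Fin n) ℂ → ℝ) (hN : IsUnitarilyInvariantNorm N) :
    N (herFun hA f * X + X * herFun hB g) ≤
      (2 * Real.sqrt 2 / (dDist hA * dDist hB)) * N (matAbs (A * X * B) + matAbs X) := by
  have hNneg := N_nonneg hN
  set dA := dDist hA with hdAdef
  set dB := dDist hB with hdBdef
  have hdA0 : 0 < dA := dDist_pos hn hA hAspec
  have hdB0 : 0 < dB := dDist_pos hn hB hBspec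
  have hdA1 : dA ≤ 1 := dDist_le_one hn hA
  have hdB1 : dB ≤ 1 := dDist_le_one hn hB
  set cA := (2 - dA) / dA with hcAdef
  set cB := (2 - dB) / dB with hcBdef
  have hcA0 : 0 < cA := div_pos (by linarith) hdA0
  have hcB0 : 0 < cB := div_pos (by linarith) hdB0
  have hfbound : ∀ i, ‖f ((hA.eigenvalues i : ℝ) : ℂ)‖ ≤ cA := by
    intro i
    have ht : |hA.eigenvalues i| ≤ 1 - dA := by linarith [dDist_le_aux hA i]
    have hnorm : ‖((hA.eigenvalues i : ℝ) : ℂ)‖ = |hA.eigenvalues i| := by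
      rw [Complex.norm_real, Real.norm_eq_abs]
    have h1 : ‖f ((hA.eigenvalues i : ℝ) : ℂ)‖
        ≤ (1 + |hA.eigenvalues i|) / (1 - |hA.eigenvalues i|) := by
      have := memH_bound hf (z := ((hA.eigenvalues i : ℝ) : ℂ)) (by rw [hnorm]; exact hAspec i)
      rwa [hnorm] at this
    refine h1.trans ?_
    have habs0 : 0 ≤ |hA.eigenvalues i| := abs_nonneg _
    have hlt1 : |hA.eigenvalues i| < 1 := hAspec i
    rw [hcAdef, div_le_div_iff₀ (by linarith) hdA0]
    nlinarith
  have hgbound : ∀ i, ‖g ((hB.eigenvalues i : ℝ) : ℂ)‖ ≤ cB := by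
    intro i
    have ht : |hB.eigenvalues i| ≤ 1 - dB := by linarith [dDist_le_aux hB i]
    have hnorm : ‖((hB.eigenvalues i : ℝ) : ℂ)‖ = |hB.eigenvalues i| := by
      rw [Complex.norm_real, Real.norm_eq_abs]
    have h1 : ‖g ((hB.eigenvalues i : ℝ) : ℂ)‖
        ≤ (1 + |hB.eigenvalues i|) / (1 - |hB.eigenvalues i|) := by
      have := memH_bound hg (z := ((hB.eigenvalues i : ℝ) : ℂ)) (by rw [hnorm]; exact hBspec i)
      rwa [hnorm] at this
    refine h1.trans ?_
    have habs0 : 0 ≤ |hB.eigenvalues i| := abs_nonneg _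
    have hlt1 : |hB.eigenvalues i| < 1 := hBspec i
    rw [hcBdef, div_le_div_iff₀ (by linarith) hdB0]
    nlinarith
  have hlhs : N (herFun hA f * X + X * herFun hB g) ≤ (cA + cB) * N X := by
    have t := hN.2.2.1 (herFun hA f * X) (X * herFun hB g)
    have a1 := N_herFun_mul_le hN hA hcA0 hfbound X
    have a2 := N_mul_herFun_le hN hB hcB0 hgbound X
    nlinarith
  obtain ⟨W, hW, hXW⟩ := exists_unitary_polar X
  have hNX : N X = N (matAbs X) := by
    conv_lhs => rw [hXW]
    exact N_U_mul hN hW _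
  have hmono : N (matAbs X) ≤ N (matAbs (A * X * B) + matAbs X) := by
    have := N_psd_mono hN (matAbs_posSemidef X) (matAbs_posSemidef (A * X * B))
    rwa [add_comm] at this
  have hNR : 0 ≤ N (matAbs (A * X * B) + matAbs X) := hNneg _
  have hs2 : (1 : ℝ) ≤ Real.sqrt 2 := by
    rw [show (1 : ℝ) = Real.sqrt 1 from (Real.sqrt_one).symm]
    exact Real.sqrt_le_sqrt (by norm_num)
  have hconst : cA + cB ≤ 2 * Real.sqrt 2 / (dA * dB) := by
    have key : (2 - dA) * dB + dA * (2 - dB) ≤ 2 * Real.sqrt 2 := by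
      nlinarith [mul_nonneg (sub_nonneg.2 hdA1) (sub_nonneg.2 hdB1)]
    rw [hcAdef, hcBdef, div_add_div _ _ (ne_of_gt hdA0) (ne_of_gt hdB0),
      div_le_div_iff₀ (mul_pos hdA0 hdB0) (mul_pos hdA0 hdB0)]
    have := mul_le_mul_of_nonneg_right key (le_of_lt (mul_pos hdA0 hdB0))
    linarith
  calc N (herFun hA f * X + X * herFun hB g) ≤ (cA + cB) * N X := hlhs
    _ = (cA + cB) * N (matAbs X) := by rw [hNX]
    _ ≤ (cA + cB) * N (matAbs (A * X * B) + matAbs X) :=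
        mul_le_mul_of_nonneg_left hmono (le_of_lt (add_pos hcA0 hcB0))
    _ ≤ (2 * Real.sqrt 2 / (dA * dB)) * N (matAbs (A * X * B) + matAbs X) :=
        mul_le_mul_of_nonneg_right hconst hNR
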